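/- Let ℓ ≥ 2 and let ξ_1, …, ξ_ℓ be pairwise distinct complex variables (elements of a polynomial ring). Then the polynomial Σ_{p=1}^{ℓ} (−1)^{p−1} ξ_p^{ℓ} Π_{1 ≤ α < β ≤ ℓ, α,β ≠ p} (ξ_α − ξ_β) is divisible by (ξ_γ − ξ_δ) for every pair γ < δ. -/

import Mathlib

open MvPolynomial Finset

/-- Substitution lemma: if P vanishes under the map sending X δ to X γ,
then X γ - X δ divides P. -/
lemma dvd_of_subst {n : ℕ} (γ δ : Fin n) (P : MvPolynomial (Fin n) ℂ)
    (h : aeval (fun i => if i = δ then (X γ : MvPolynomial (Fin n) ℂ) else X i) P = 0) :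
    (X γ - X δ : MvPolynomial (Fin n) ℂ) ∣ P := by
  set f : Fin n → MvPolynomial (Fin n) ℂ := fun i => if i = δ then X γ else X i with hf
  rw [← Ideal.mem_span_singleton]
  set I := Ideal.span {(X γ - X δ : MvPolynomial (Fin n) ℂ)}
  have hmem : (X γ - X δ : MvPolynomial (Fin n) ℂ) ∈ I :=
    Ideal.subset_span (Set.mem_singleton _)
  have key : (Ideal.Quotient.mk I).comp (aeval f : MvPolynomial (Fin n) ℂ →ₐ[ℂ]
      MvPolynomial (Fin n) ℂ).toRingHom = Ideal.Quotient.mk I := by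
    apply MvPolynomial.ringHom_ext
    · intro r; simp
    · intro i
      simp only [RingHom.comp_apply, AlgHom.toRingHom_eq_coe, RingHom.coe_coe, aeval_X]
      by_cases hi : i = δ
      · subst hi
        simp only [hf, if_pos rfl]
        exact (Ideal.Quotient.eq.mpr hmem)
      · simp [hf, hi]
  have : Ideal.Quotient.mk I P = Ideal.Quotient.mk I (aeval f P) := by
    conv_lhs => rw [← key]
    rfl
  rw [h, map_zero] at this
  exact Ideal.Quotient.eq_zero_iff_mem.mp this

/-- Converting a product over ordered pairs into a nested product. -/
lemma prod_pairs {M : Type*} [CommMonoid M] (n : ℕ) (f : Fin n → Fin n → M) :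
    ∏ q ∈ Finset.univ.filter (fun q : Fin n × Fin n => q.1 < q.2), f q.1 q.2
      = ∏ i : Fin n, ∏ j ∈ Finset.Ioi i, f i j := by
  have h2 : (∏ i : Fin n, ∏ j ∈ Finset.Ioi i, f i j)
      = ∏ x ∈ (Finset.univ : Finset (Fin n)).sigma (fun i => Finset.Ioi i), f x.1 x.2 :=
    (Finset.prod_sigma Finset.univ (fun i => Finset.Ioi i) (fun x => f x.1 x.2)).symm
  rw [h2]
  apply Finset.prod_bij (fun q _ => (⟨q.1, q.2⟩ : Σ _ : Fin n, Fin n))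
  · intro q hq
    simp only [Finset.mem_filter, Finset.mem_univ, true_and] at hq
    simp [Finset.mem_sigma, Finset.mem_Ioi, hq]
  · intro a ha b hb hab
    simp only [Sigma.mk.inj_iff, heq_eq_eq] at hab
    exact Prod.ext hab.1 hab.2
  · intro b hb
    simp only [Finset.mem_sigma, Finset.mem_univ, Finset.mem_Ioi, true_and] at hb
    exact ⟨(b.1, b.2), by simp [hb], rfl⟩
  · intro q hq; rfl

theorem stmt1 (ℓ : ℕ) (hℓ : 2 ≤ ℓ) (γ δ : Fin ℓ) (hγδ : γ < δ) :
    (X γ - X δ : MvPolynomial (Fin ℓ) ℂ) ∣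
      ∑ p : Fin ℓ, (-1 : MvPolynomial (Fin ℓ) ℂ) ^ (p : ℕ) * X p ^ ℓ *
        ∏ q ∈ Finset.univ.filter
            (fun q : Fin ℓ × Fin ℓ => q.1 < q.2 ∧ q.1 ≠ p ∧ q.2 ≠ p),
          (X q.1 - X q.2) := by
  obtain ⟨m, rfl⟩ : ∃ m, ℓ = m + 1 := ⟨ℓ - 1, by omega⟩
  set R := MvPolynomial (Fin (m + 1)) ℂ
  set A : Matrix (Fin (m + 1)) (Fin (m + 1)) R :=
    fun i j => Fin.cases ((X i : R) ^ (m + 1)) (fun j' => (X i : R) ^ (j' : ℕ)) j with hA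
  set N := (Finset.univ.filter (fun q : Fin m × Fin m => q.1 < q.2)).card with hN
  -- product identity
  have hprod : ∀ p : Fin (m + 1),
      (∏ q ∈ Finset.univ.filter
          (fun q : Fin (m + 1) × Fin (m + 1) => q.1 < q.2 ∧ q.1 ≠ p ∧ q.2 ≠ p),
        (X q.1 - X q.2 : R))
      = (-1 : R) ^ N * ∏ i : Fin m, ∏ j ∈ Finset.Ioi i,
          ((X (p.succAbove j) : R) - X (p.succAbove i)) := by
    intro p
    have hb : (∏ q ∈ Finset.univ.filter
          (fun q : Fin (m + 1) × Fin (m + 1) => q.1 < q.2 ∧ q.1 ≠ p ∧ q.2 ≠ p),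
        (X q.1 - X q.2 : R))
        = ∏ q ∈ Finset.univ.filter (fun q : Fin m × Fin m => q.1 < q.2),
            ((X (p.succAbove q.1) : R) - X (p.succAbove q.2)) := by
      symm
      apply Finset.prod_nbij (fun q : Fin m × Fin m => (p.succAbove q.1, p.succAbove q.2))
      · intro q hq
        simp only [Finset.mem_filter, Finset.mem_univ, true_and] at hq ⊢
        exact ⟨(Fin.strictMono_succAbove p) hq, Fin.succAbove_ne p _, Fin.succAbove_ne p _⟩
      · intro a _ b _ hab
        simp only [Prod.mk.injEq] at hab
        exact Prod.ext ((Fin.succAbove_right_injective) hab.1)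
          ((Fin.succAbove_right_injective) hab.2)
      · intro q hq
        simp only [Finset.coe_filter, Finset.mem_univ, true_and, Set.mem_setOf_eq] at hq
        obtain ⟨h1, h2, h3⟩ := hq
        obtain ⟨a, ha⟩ := Fin.exists_succAbove_eq h2
        obtain ⟨b, hb⟩ := Fin.exists_succAbove_eq h3
        refine ⟨(a, b), ?_, ?_⟩
        · simp only [Finset.coe_filter, Finset.mem_univ, true_and, Set.mem_setOf_eq]
          rw [← (Fin.strictMono_succAbove p).lt_iff_lt, ha, hb]
          exact h1
        · simp [ha, hb]
      · intro q hq; rfl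
    rw [hb]
    have hneg : ∀ q : Fin m × Fin m,
        ((X (p.succAbove q.1) : R) - X (p.succAbove q.2))
          = -((X (p.succAbove q.2) : R) - X (p.succAbove q.1)) := fun q => by ring
    calc (∏ q ∈ Finset.univ.filter (fun q : Fin m × Fin m => q.1 < q.2),
            ((X (p.succAbove q.1) : R) - X (p.succAbove q.2)))
        = ∏ q ∈ Finset.univ.filter (fun q : Fin m × Fin m => q.1 < q.2),
            ((-1 : R) * ((X (p.succAbove q.2) : R) - X (p.succAbove q.1))) := by
          apply Finset.prod_congr rfl; intro q _; rw [hneg q]; ring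
      _ = (-1 : R) ^ N * ∏ q ∈ Finset.univ.filter (fun q : Fin m × Fin m => q.1 < q.2),
            ((X (p.succAbove q.2) : R) - X (p.succAbove q.1)) := by
          rw [Finset.prod_mul_distrib, Finset.prod_const, hN]
      _ = (-1 : R) ^ N * ∏ i : Fin m, ∏ j ∈ Finset.Ioi i,
            ((X (p.succAbove j) : R) - X (p.succAbove i)) := by
          rw [prod_pairs m (fun i j => (X (p.succAbove j) : R) - X (p.succAbove i))]
  -- determinant identity
  have hdet : (A.det : R) = ∑ p : Fin (m + 1), (-1 : R) ^ (p : ℕ) * X p ^ (m + 1) *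
      ∏ i : Fin m, ∏ j ∈ Finset.Ioi i,
        ((X (p.succAbove j) : R) - X (p.succAbove i)) := by
    rw [Matrix.det_succ_column_zero]
    apply Finset.sum_congr rfl
    intro p _
    have hsub : A.submatrix p.succAbove Fin.succ
        = Matrix.vandermonde (fun a => (X (p.succAbove a) : R)) := by
      ext a b
      simp [hA, Matrix.vandermonde, Matrix.submatrix]
    rw [hsub, Matrix.det_vandermonde]
    simp [hA]
  -- combine
  have hsum : (∑ p : Fin (m + 1), (-1 : R) ^ (p : ℕ) * X p ^ (m + 1) *
        ∏ q ∈ Finset.univ.filter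
            (fun q : Fin (m + 1) × Fin (m + 1) => q.1 < q.2 ∧ q.1 ≠ p ∧ q.2 ≠ p),
          (X q.1 - X q.2 : R))
      = (-1 : R) ^ N * A.det := by
    rw [hdet, Finset.mul_sum]
    apply Finset.sum_congr rfl
    intro p _
    rw [hprod p]; ring
  rw [hsum]
  apply Dvd.dvd.mul_left
  -- divisibility of the determinant
  apply dvd_of_subst γ δ
  set f : Fin (m + 1) → R := fun i => if i = δ then X γ else X i with hf
  rw [show (aeval f) A.det = ((aeval f : R →ₐ[ℂ] R) : R →+* R) A.det from rfl,
    RingHom.map_det]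
  apply Matrix.det_zero_of_row_eq (ne_of_lt hγδ)
  funext j
  have hγδ' : γ ≠ δ := ne_of_lt hγδ
  have hfγ : (aeval f) (X γ : R) = X γ := by rw [aeval_X, hf]; simp [hγδ']
  have hfδ : (aeval f) (X δ : R) = X γ := by rw [aeval_X, hf]; simp
  cases j using Fin.cases
  · simp only [RingHom.mapMatrix_apply, Matrix.map_apply]
    simp [hA, map_pow, hfγ, hfδ]
  · simp only [RingHom.mapMatrix_apply, Matrix.map_apply]
    simp [hA, map_pow, hfγ, hfδ]
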